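/- Let 0 < s < 1 and 1 ≤ p with (2/3 + s)p < 1. Then the function g(x) = x^{-2/3} belongs to the fractional Sobolev space W^{s,p}(0,1), i.e. the Gagliardo seminorm ∫₀¹∫₀¹ |g(x) - g(y)|^p / |x - y|^{1 + sp} dx dy is finite. Consequently u(x) = x^{1/3} belongs to W^{1+s,p}(0,1). -/

import Mathlib

open MeasureTheory Set

open Real
open scoped NNReal ENNReal

lemma aux_rpow_add {u v q : ℝ} (hu : 0 ≤ u) (hv : 0 ≤ v) (hq : 0 ≤ q) (hq1 : q ≤ 1) :
    (u + v) ^ q ≤ u ^ q + v ^ q := by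
  lift u to ℝ≥0 using hu
  lift v to ℝ≥0 using hv
  have := NNReal.rpow_add_le_add_rpow u v hq hq1
  rw [← NNReal.coe_le_coe] at this
  push_cast at this
  exact this

lemma aux_int {c : ℝ} (hc : -1 < c) :
    ∫⁻ τ in Ioo (0:ℝ) 1, ENNReal.ofReal (τ ^ c) < ⊤ := by
  have h1 : IntervalIntegrable (fun τ : ℝ => τ ^ c) volume 0 1 :=
    intervalIntegral.intervalIntegrable_rpow' hc
  have h2 : IntegrableOn (fun τ : ℝ => τ ^ c) (Ioo 0 1) volume :=
    (h1.1).mono_set Ioo_subset_Ioc_self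
  calc ∫⁻ τ in Ioo (0:ℝ) 1, ENNReal.ofReal (τ ^ c)
      ≤ ∫⁻ τ in Ioo (0:ℝ) 1, (‖τ ^ c‖₊ : ℝ≥0∞) := by
        refine lintegral_mono fun τ => ?_
        rw [← enorm_eq_nnnorm, Real.enorm_eq_ofReal_abs]
        exact ENNReal.ofReal_le_ofReal (le_abs_self _)
    _ < ⊤ := h2.2

lemma aux_trans (x : ℝ) (f : ℝ → ℝ≥0∞) :
    ∫⁻ w in Ioo x 1, f (w - x) = ∫⁻ τ in Ioo 0 (1 - x), f τ := by
  have hmp : MeasurePreserving (fun w : ℝ => w - x) volume volume := by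
    simpa [sub_eq_add_neg] using measurePreserving_add_right (volume : Measure ℝ) (-x)
  have hemb : MeasurableEmbedding (fun w : ℝ => w - x) := by
    have : (fun w : ℝ => w - x) = fun w : ℝ => w + (-x) := by funext w; ring
    rw [this]
    exact (MeasurableEquiv.addRight (-x)).measurableEmbedding
  have := hmp.setLIntegral_comp_preimage_emb hemb f (Ioo 0 (1 - x))
  rw [preimage_sub_const_Ioo] at this
  simpa using this

lemma aux_interp {x y t : ℝ} (hy : 0 < y) (hyx : y < x) (ht0 : 0 ≤ t) (ht1 : t ≤ 2/3) :
    y ^ (-(2:ℝ)/3) - x ^ (-(2:ℝ)/3) ≤ (x - y) ^ t * y ^ (-(2:ℝ)/3 - t) := by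
  have hx : 0 < x := hy.trans hyx
  have hxy0 : (0:ℝ) < x - y := sub_pos.2 hyx
  set d := y ^ (-(2:ℝ)/3) - x ^ (-(2:ℝ)/3) with hd_def
  have hd0 : 0 ≤ d :=
    sub_nonneg.2 (Real.rpow_le_rpow_of_nonpos hy hyx.le (by norm_num))
  -- bound A
  have hA : d ≤ y ^ (-(2:ℝ)/3) :=
    sub_le_self _ (Real.rpow_nonneg hx.le _)
  -- bound B
  have hxr : (0:ℝ) < x ^ ((2:ℝ)/3) := Real.rpow_pos_of_pos hx _
  have hyr : (0:ℝ) < y ^ ((2:ℝ)/3) := Real.rpow_pos_of_pos hy _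
  have hxinv : x ^ (-(2:ℝ)/3) = (x ^ ((2:ℝ)/3))⁻¹ := by
    rw [← Real.rpow_neg hx.le]; norm_num
  have hyinv : y ^ (-(2:ℝ)/3) = (y ^ ((2:ℝ)/3))⁻¹ := by
    rw [← Real.rpow_neg hy.le]; norm_num
  have hsub : x ^ ((2:ℝ)/3) - y ^ ((2:ℝ)/3) ≤ (x - y) ^ ((2:ℝ)/3) := by
    have : x ^ ((2:ℝ)/3) ≤ (x - y) ^ ((2:ℝ)/3) + y ^ ((2:ℝ)/3) := by
      calc x ^ ((2:ℝ)/3) = ((x - y) + y) ^ ((2:ℝ)/3) := by ring_nf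
        _ ≤ _ := aux_rpow_add hxy0.le hy.le (by norm_num) (by norm_num)
    linarith
  have hB : d ≤ (x - y) ^ ((2:ℝ)/3) * (x ^ (-(2:ℝ)/3) * y ^ (-(2:ℝ)/3)) := by
    rw [hd_def, hxinv, hyinv]
    have e1 : (y ^ ((2:ℝ)/3))⁻¹ - (x ^ ((2:ℝ)/3))⁻¹
        = (x ^ ((2:ℝ)/3) - y ^ ((2:ℝ)/3)) * ((x ^ ((2:ℝ)/3))⁻¹ * (y ^ ((2:ℝ)/3))⁻¹) := by
      field_simp
    rw [e1]
    exact mul_le_mul_of_nonneg_right hsub (by positivity)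
  have hN : (0:ℝ) ≤ (x - y) ^ ((2:ℝ)/3) := Real.rpow_nonneg hxy0.le _
  -- interpolation
  set l : ℝ := 3 * t / 2 with hl_def
  have hl0 : 0 ≤ l := by positivity
  have hl1 : l ≤ 1 := by rw [hl_def]; linarith
  rcases eq_or_lt_of_le hd0 with h0 | hd0'
  · rw [← h0]
    positivity
  calc d = d ^ (1 - l) * d ^ l := by
        rw [← Real.rpow_add hd0', sub_add_cancel, Real.rpow_one]
    _ ≤ (y ^ (-(2:ℝ)/3)) ^ (1 - l) *
          ((x - y) ^ ((2:ℝ)/3) * (x ^ (-(2:ℝ)/3) * y ^ (-(2:ℝ)/3))) ^ l := by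
        refine mul_le_mul (Real.rpow_le_rpow hd0 hA (by linarith))
          (Real.rpow_le_rpow hd0 hB hl0) (Real.rpow_nonneg hd0 _) (Real.rpow_nonneg ?_ _)
        positivity
    _ = (x - y) ^ ((2:ℝ)/3 * l) *
          (x ^ (-(2:ℝ)/3 * l) * (y ^ (-(2:ℝ)/3 * (1 - l)) * y ^ (-(2:ℝ)/3 * l))) := by
        rw [Real.mul_rpow hN (by positivity), Real.mul_rpow (by positivity) (by positivity),
          ← Real.rpow_mul hxy0.le, ← Real.rpow_mul hx.le, ← Real.rpow_mul hy.le,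
          ← Real.rpow_mul hy.le]
        ring
    _ ≤ (x - y) ^ ((2:ℝ)/3 * l) *
          (y ^ (-(2:ℝ)/3 * l) * (y ^ (-(2:ℝ)/3 * (1 - l)) * y ^ (-(2:ℝ)/3 * l))) := by
        refine mul_le_mul_of_nonneg_left (mul_le_mul_of_nonneg_right
          (Real.rpow_le_rpow_of_nonpos hy hyx.le (by nlinarith)) (by positivity))
          (Real.rpow_nonneg hxy0.le _)
    _ = (x - y) ^ t * y ^ (-(2:ℝ)/3 - t) := by
        rw [← Real.rpow_add hy, ← Real.rpow_add hy]
        congr 1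
        · congr 1; rw [hl_def]; ring
        · congr 1; rw [hl_def]; ring


lemma aux_meas_rpow (c : ℝ) : Measurable (fun x : ℝ => x ^ c) := by measurability

lemma aux_innerK (a b : ℝ) {x : ℝ} (hx : x ∈ Ioo (0:ℝ) 1) :
    (∫⁻ y in Ioo (0:ℝ) 1, if x < y then ENNReal.ofReal ((y - x) ^ (a-1) * x ^ (-b)) else 0)
      ≤ ENNReal.ofReal (x ^ (-b)) * ∫⁻ τ in Ioo (0:ℝ) 1, ENNReal.ofReal (τ ^ (a-1)) := by
  have hset : Ioi x ∩ Ioo (0:ℝ) 1 = Ioo x 1 := by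
    ext z; simp only [mem_inter_iff, mem_Ioi, mem_Ioo]
    constructor
    · rintro ⟨h1, _, h3⟩; exact ⟨h1, h3⟩
    · rintro ⟨h1, h2⟩; exact ⟨h1, hx.1.trans h1, h2⟩
  calc (∫⁻ y in Ioo (0:ℝ) 1, if x < y then ENNReal.ofReal ((y - x) ^ (a-1) * x ^ (-b)) else 0)
      = ∫⁻ y in Ioo (0:ℝ) 1,
          (Ioi x).indicator (fun y => ENNReal.ofReal ((y - x) ^ (a-1) * x ^ (-b))) y := by
        refine lintegral_congr fun y => ?_
        simp [Set.indicator_apply, mem_Ioi]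
    _ = ∫⁻ y in Ioi x ∩ Ioo (0:ℝ) 1, ENNReal.ofReal ((y - x) ^ (a-1) * x ^ (-b)) := by
        rw [lintegral_indicator measurableSet_Ioi, Measure.restrict_restrict measurableSet_Ioi]
    _ = ∫⁻ y in Ioo x 1, ENNReal.ofReal ((y - x) ^ (a-1) * x ^ (-b)) := by rw [hset]
    _ = ∫⁻ y in Ioo x 1, ENNReal.ofReal (x ^ (-b)) * ENNReal.ofReal ((y - x) ^ (a-1)) := by
        refine setLIntegral_congr_fun measurableSet_Ioo (fun y hy => ?_)
        rw [ENNReal.ofReal_mul (Real.rpow_nonneg (le_of_lt (sub_pos.2 hy.1)) _), mul_comm]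
    _ = ENNReal.ofReal (x ^ (-b)) * ∫⁻ y in Ioo x 1, ENNReal.ofReal ((y - x) ^ (a-1)) :=
        lintegral_const_mul' _ _ ENNReal.ofReal_ne_top
    _ = ENNReal.ofReal (x ^ (-b)) * ∫⁻ τ in Ioo 0 (1-x), ENNReal.ofReal (τ ^ (a-1)) := by
        rw [aux_trans x (fun τ => ENNReal.ofReal (τ ^ (a-1)))]
    _ ≤ ENNReal.ofReal (x ^ (-b)) * ∫⁻ τ in Ioo (0:ℝ) 1, ENNReal.ofReal (τ ^ (a-1)) :=
        mul_le_mul_right (lintegral_mono_set (Ioo_subset_Ioo le_rfl (by linarith [hx.1]))) _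

lemma aux_div_bound {s p t x y : ℝ} (hs : 0 < s) (hp : 1 ≤ p) (ht0 : s < t) (ht1 : t ≤ 2/3)
    (hy : 0 < y) (hyx : y < x) :
    |x ^ (-(2:ℝ)/3) - y ^ (-(2:ℝ)/3)| ^ p / |x - y| ^ (1 + s * p)
      ≤ (x - y) ^ ((t - s) * p - 1) * y ^ (-((2/3 + t) * p)) := by
  have hx : 0 < x := hy.trans hyx
  have hxy0 : (0:ℝ) < x - y := sub_pos.2 hyx
  have hp0 : (0:ℝ) < p := lt_of_lt_of_le one_pos hp
  have hd0 : 0 ≤ y ^ (-(2:ℝ)/3) - x ^ (-(2:ℝ)/3) :=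
    sub_nonneg.2 (Real.rpow_le_rpow_of_nonpos hy hyx.le (by norm_num))
  have habs : |x ^ (-(2:ℝ)/3) - y ^ (-(2:ℝ)/3)| = y ^ (-(2:ℝ)/3) - x ^ (-(2:ℝ)/3) := by
    rw [abs_sub_comm, abs_of_nonneg hd0]
  have hinterp := aux_interp hy hyx (le_of_lt (hs.trans ht0)) ht1
  have hnum : |x ^ (-(2:ℝ)/3) - y ^ (-(2:ℝ)/3)| ^ p
      ≤ (x - y) ^ (t * p) * y ^ ((-(2:ℝ)/3 - t) * p) := by
    rw [habs]
    calc (y ^ (-(2:ℝ)/3) - x ^ (-(2:ℝ)/3)) ^ p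
        ≤ ((x - y) ^ t * y ^ (-(2:ℝ)/3 - t)) ^ p :=
          Real.rpow_le_rpow hd0 hinterp hp0.le
      _ = (x - y) ^ (t * p) * y ^ ((-(2:ℝ)/3 - t) * p) := by
          rw [Real.mul_rpow (Real.rpow_nonneg hxy0.le _) (Real.rpow_nonneg hy.le _),
            ← Real.rpow_mul hxy0.le, ← Real.rpow_mul hy.le]
  have hden : |x - y| ^ (1 + s * p) = (x - y) ^ (1 + s * p) := by
    rw [abs_of_pos hxy0]
  have hdenpos : (0:ℝ) < (x - y) ^ (1 + s * p) := Real.rpow_pos_of_pos hxy0 _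
  rw [hden]
  rw [div_le_iff₀ hdenpos]
  calc |x ^ (-(2:ℝ)/3) - y ^ (-(2:ℝ)/3)| ^ p
      ≤ (x - y) ^ (t * p) * y ^ ((-(2:ℝ)/3 - t) * p) := hnum
    _ = ((x - y) ^ ((t - s) * p - 1) * y ^ (-((2/3 + t) * p))) * (x - y) ^ (1 + s * p) := by
        rw [mul_right_comm, ← Real.rpow_add hxy0]
        congr 2
        · ring
        · ring

lemma aux_point {s p t x y : ℝ} (hs : 0 < s) (hp : 1 ≤ p) (ht0 : s < t) (ht1 : t ≤ 2/3)
    (hx : x ∈ Ioo (0:ℝ) 1) (hy : y ∈ Ioo (0:ℝ) 1) :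
    ENNReal.ofReal (|x ^ (-(2:ℝ)/3) - y ^ (-(2:ℝ)/3)| ^ p / |x - y| ^ (1 + s * p))
      ≤ (if y < x then ENNReal.ofReal ((x - y) ^ ((t - s) * p - 1) * y ^ (-((2/3 + t) * p))) else 0)
        + (if x < y then ENNReal.ofReal ((y - x) ^ ((t - s) * p - 1) * x ^ (-((2/3 + t) * p))) else 0) := by
  have hp0 : (0:ℝ) < p := lt_of_lt_of_le one_pos hp
  rcases lt_trichotomy y x with h | h | h
  · rw [if_pos h, if_neg (not_lt.2 h.le)]
    rw [add_zero]
    exact ENNReal.ofReal_le_ofReal (aux_div_bound hs hp ht0 ht1 hy.1 h)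
  · subst h
    simp only [sub_self, abs_zero]
    rw [Real.zero_rpow (by positivity : (1:ℝ) + s * p ≠ 0), div_zero]
    simp
  · rw [if_neg (not_lt.2 h.le), if_pos h, zero_add]
    have := aux_div_bound hs hp ht0 ht1 hx.1 h
    rw [abs_sub_comm, abs_sub_comm y x] at this
    exact ENNReal.ofReal_le_ofReal this

/-- For `0 < s < 1`, `1 ≤ p` with `(2/3 + s)p < 1`, the function `g(x) = x^{-2/3}`
has finite Gagliardo `W^{s,p}(0,1)` seminorm (and lies in `L^p(0,1)`); consequently
`u(x) = x^{1/3}` belongs to `W^{1+s,p}(0,1)` (i.e. `u ∈ L^p` and `u' ∈ W^{s,p}`). -/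
theorem stmt_2 (s p : ℝ) (hs : 0 < s) (hs1 : s < 1) (hp : 1 ≤ p)
    (hsp : (2/3 + s) * p < 1) :
    let g : ℝ → ℝ := fun x => x ^ (-(2:ℝ)/3)
    let u : ℝ → ℝ := fun x => x ^ ((1:ℝ)/3)
    (∫⁻ x in Ioo (0:ℝ) 1, ∫⁻ y in Ioo (0:ℝ) 1,
        ENNReal.ofReal (|g x - g y| ^ p / |x - y| ^ (1 + s * p))) < ⊤ ∧
    MemLp g (ENNReal.ofReal p) (volume.restrict (Ioo (0:ℝ) 1)) ∧
    MemLp u (ENNReal.ofReal p) (volume.restrict (Ioo (0:ℝ) 1)) := by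
  intro g u
  have hp0 : (0:ℝ) < p := lt_of_lt_of_le one_pos hp
  have hsp' : 2/3 + s < 1/p := by
    rw [lt_div_iff₀ hp0]; linarith
  have hp_inv : 1/p ≤ 1 := by rw [div_le_one hp0]; exact hp
  set t : ℝ := (s + (1/p - 2/3)) / 2 with ht_def
  have ht0 : s < t := by rw [ht_def]; linarith
  have htlt : t < 1/p - 2/3 := by rw [ht_def]; linarith
  have ht1 : t ≤ 2/3 := by linarith
  set a : ℝ := (t - s) * p with ha_def
  set b : ℝ := (2/3 + t) * p with hb_def
  have ha : 0 < a := mul_pos (by linarith) hp0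
  have hb0 : 0 < b := mul_pos (by linarith) hp0
  have hb1 : b < 1 := by
    rw [hb_def]
    calc (2/3 + t) * p < (1/p) * p := by
          apply mul_lt_mul_of_pos_right ?_ hp0; linarith
      _ = 1 := by field_simp
  have hC0 : (∫⁻ τ in Ioo (0:ℝ) 1, ENNReal.ofReal (τ ^ (a-1))) < ⊤ := aux_int (by linarith)
  have hC1 : (∫⁻ z in Ioo (0:ℝ) 1, ENNReal.ofReal (z ^ (-b))) < ⊤ := aux_int (by linarith)
  have hofp0 : ENNReal.ofReal p ≠ 0 := by
    simp only [ne_eq, ENNReal.ofReal_eq_zero, not_le]; exact hp0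
  refine ⟨?_, ?_, ?_⟩
  · -- the double integral
    set K : ℝ → ℝ → ℝ≥0∞ :=
      fun x y => if y < x then ENNReal.ofReal ((x - y) ^ (a-1) * y ^ (-b)) else 0 with hK_def
    have measK : Measurable (Function.uncurry K) := by
      apply Measurable.ite (measurableSet_lt measurable_snd measurable_fst) ?_ measurable_const
      exact ENNReal.measurable_ofReal.comp
        (((aux_meas_rpow (a-1)).comp (measurable_fst.sub measurable_snd)).mul
          ((aux_meas_rpow (-b)).comp measurable_snd))
    have measKx : ∀ x : ℝ, Measurable (fun y => K x y) := fun x =>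
      measK.comp measurable_prodMk_left
    have measKy : ∀ y : ℝ, Measurable (fun x => K x y) := fun y =>
      measK.comp (measurable_id.prodMk measurable_const)
    have hI2 : (∫⁻ x in Ioo (0:ℝ) 1, ∫⁻ y in Ioo (0:ℝ) 1, K y x) < ⊤ := by
      calc (∫⁻ x in Ioo (0:ℝ) 1, ∫⁻ y in Ioo (0:ℝ) 1, K y x)
          ≤ ∫⁻ x in Ioo (0:ℝ) 1,
              ENNReal.ofReal (x ^ (-b)) * ∫⁻ τ in Ioo (0:ℝ) 1, ENNReal.ofReal (τ ^ (a-1)) := by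
            refine setLIntegral_mono' measurableSet_Ioo fun x hx => ?_
            exact aux_innerK a b hx
        _ = (∫⁻ z in Ioo (0:ℝ) 1, ENNReal.ofReal (z ^ (-b)))
              * ∫⁻ τ in Ioo (0:ℝ) 1, ENNReal.ofReal (τ ^ (a-1)) :=
            lintegral_mul_const' _ _ (ne_of_lt hC0)
        _ < ⊤ := ENNReal.mul_lt_top hC1 hC0
    have hI1 : (∫⁻ x in Ioo (0:ℝ) 1, ∫⁻ y in Ioo (0:ℝ) 1, K x y) < ⊤ := by
      rw [lintegral_lintegral_swap measK.aemeasurable]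
      calc (∫⁻ y in Ioo (0:ℝ) 1, ∫⁻ x in Ioo (0:ℝ) 1, K x y)
          ≤ ∫⁻ y in Ioo (0:ℝ) 1,
              ENNReal.ofReal (y ^ (-b)) * ∫⁻ τ in Ioo (0:ℝ) 1, ENNReal.ofReal (τ ^ (a-1)) := by
            refine setLIntegral_mono' measurableSet_Ioo fun y hy => ?_
            exact aux_innerK a b hy
        _ = (∫⁻ z in Ioo (0:ℝ) 1, ENNReal.ofReal (z ^ (-b)))
              * ∫⁻ τ in Ioo (0:ℝ) 1, ENNReal.ofReal (τ ^ (a-1)) :=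
            lintegral_mul_const' _ _ (ne_of_lt hC0)
        _ < ⊤ := ENNReal.mul_lt_top hC1 hC0
    calc (∫⁻ x in Ioo (0:ℝ) 1, ∫⁻ y in Ioo (0:ℝ) 1,
            ENNReal.ofReal (|g x - g y| ^ p / |x - y| ^ (1 + s * p)))
        ≤ ∫⁻ x in Ioo (0:ℝ) 1,
            ((∫⁻ y in Ioo (0:ℝ) 1, K x y) + ∫⁻ y in Ioo (0:ℝ) 1, K y x) := by
          refine setLIntegral_mono' measurableSet_Ioo fun x hx => ?_
          calc (∫⁻ y in Ioo (0:ℝ) 1, ENNReal.ofReal (|g x - g y| ^ p / |x - y| ^ (1 + s * p)))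
              ≤ ∫⁻ y in Ioo (0:ℝ) 1, (K x y + K y x) := by
                refine setLIntegral_mono' measurableSet_Ioo fun y hy => ?_
                have := aux_point hs hp ht0 ht1 hx hy (p := p)
                simp only [g, hK_def, ha_def, hb_def]
                exact this
            _ = (∫⁻ y in Ioo (0:ℝ) 1, K x y) + ∫⁻ y in Ioo (0:ℝ) 1, K y x :=
                lintegral_add_left (measKx x) _
      _ = (∫⁻ x in Ioo (0:ℝ) 1, ∫⁻ y in Ioo (0:ℝ) 1, K x y)
            + ∫⁻ x in Ioo (0:ℝ) 1, ∫⁻ y in Ioo (0:ℝ) 1, K y x :=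
          lintegral_add_left (measK.lintegral_prod_right) _
      _ < ⊤ := ENNReal.add_lt_top.2 ⟨hI1, hI2⟩
  · -- g ∈ Lᵖ
    constructor
    · exact (aux_meas_rpow _).aestronglyMeasurable
    · rw [eLpNorm_lt_top_iff_lintegral_rpow_enorm_lt_top hofp0 ENNReal.ofReal_ne_top]
      rw [ENNReal.toReal_ofReal hp0.le]
      calc (∫⁻ x in Ioo (0:ℝ) 1, (‖g x‖₊ : ℝ≥0∞) ^ p)
          = ∫⁻ x in Ioo (0:ℝ) 1, ENNReal.ofReal (x ^ (-(2:ℝ)/3 * p)) := by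
            refine setLIntegral_congr_fun measurableSet_Ioo (fun x hx => ?_)
            rw [← enorm_eq_nnnorm, Real.enorm_eq_ofReal_abs,
              ENNReal.ofReal_rpow_of_nonneg (abs_nonneg _) hp0.le]
            congr 1
            rw [abs_of_nonneg (Real.rpow_nonneg hx.1.le _), Real.rpow_mul hx.1.le]
        _ < ⊤ := aux_int (by nlinarith)
  · -- u ∈ Lᵖ
    have : IsFiniteMeasure (volume.restrict (Ioo (0:ℝ) 1)) := by
      constructor
      rw [Measure.restrict_apply_univ]
      simp [Real.volume_Ioo]
    refine MemLp.of_bound (aux_meas_rpow _).aestronglyMeasurable 1 ?_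
    rw [ae_restrict_iff' measurableSet_Ioo]
    refine ae_of_all _ fun x hx => ?_
    rw [Real.norm_eq_abs, abs_of_nonneg (Real.rpow_nonneg hx.1.le _)]
    exact Real.rpow_le_one hx.1.le hx.2.le (by norm_num)
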